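/- Let v ∈ ℝⁿ be nonzero and X ∈ B_v(n,r). For any Z ∈ ℝ^{n×r}, the orthogonal projection of Z onto the tangent space T_X B_v(n,r) = {Z' : XᵀZ' + Z'ᵀX = 0, Z'ᵀv = 0} equals P(Z) − X·sym(XᵀP(Z)), where P(Z) = (I_n − vvᵀ/‖v‖²)Z and sym(A) = (A+Aᵀ)/2. -/

import Mathlib

open Matrix

/-- The symmetric part of a square matrix: `sym(A) = (A + Aᵀ)/2`. -/
noncomputable def msym {r : ℕ} (A : Matrix (Fin r) (Fin r) ℝ) :
    Matrix (Fin r) (Fin r) ℝ :=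
  (2 : ℝ)⁻¹ • (A + Aᵀ)

/-- For `X ∈ B_v(n,r)` (`v ≠ 0`) and any `Z`, with `P(Z) = (I − vvᵀ/‖v‖²)Z`, the matrix
`R = P(Z) − X·sym(Xᵀ P(Z))` is the orthogonal projection of `Z` onto the tangent space
`{Z' : XᵀZ' + Z'ᵀX = 0, Z'ᵀv = 0}`: it lies in the tangent space and the residual
`Z − R` is trace-orthogonal to every tangent vector. -/
theorem projection_tangent_restricted_stiefel {n r : ℕ} (v : Fin n → ℝ) (hv : v ≠ 0)
    (X : Matrix (Fin n) (Fin r) ℝ) (hX : Xᵀ * X = 1) (hXv : Xᵀ *ᵥ v = 0)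
    (Z : Matrix (Fin n) (Fin r) ℝ) :
    let P : Matrix (Fin n) (Fin r) ℝ := Z - (∑ i, (v i) ^ 2)⁻¹ • (vecMulVec v v * Z)
    let R : Matrix (Fin n) (Fin r) ℝ := P - X * msym (Xᵀ * P)
    (Xᵀ * R + Rᵀ * X = 0) ∧ (Rᵀ *ᵥ v = 0) ∧
    (∀ H : Matrix (Fin n) (Fin r) ℝ,
        Xᵀ * H + Hᵀ * X = 0 → Hᵀ *ᵥ v = 0 → Matrix.trace ((Z - R)ᵀ * H) = 0) := by
  intro P R
  have hsum : (∑ i, (v i) ^ 2) ≠ 0 := by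
    intro h
    apply hv
    funext i
    have hle : (v i) ^ 2 ≤ 0 := by
      rw [← h]
      exact Finset.single_le_sum (fun j _ => sq_nonneg (v j)) (Finset.mem_univ i)
    have h0 : (v i) ^ 2 = 0 := le_antisymm hle (sq_nonneg (v i))
    simpa using pow_eq_zero_iff (n := 2) (by norm_num) |>.mp h0
  have h1 : Xᵀ * vecMulVec v v = 0 := by
    ext i j
    simp only [mul_apply, vecMulVec_apply, Matrix.zero_apply]
    have e1 : ∑ k, Xᵀ i k * (v k * v j) = (∑ k, Xᵀ i k * v k) * v j := by
      rw [Finset.sum_mul]; exact Finset.sum_congr rfl fun k _ => by ring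
    have e2 : (∑ k, Xᵀ i k * v k) = (Xᵀ *ᵥ v) i := rfl
    rw [e1, e2, hXv]; simp
  have hXP : Xᵀ * P = Xᵀ * Z := by
    simp only [P, Matrix.mul_sub, Matrix.mul_smul, ← Matrix.mul_assoc, h1]
    simp
  set S := msym (Xᵀ * P) with hS
  have hSsymm : Sᵀ = S := by
    simp only [hS, msym, Matrix.transpose_smul, Matrix.transpose_add, transpose_transpose]
    rw [add_comm]
  have hXR : Xᵀ * R = Xᵀ * P - S := by
    simp [R, Matrix.mul_sub, ← Matrix.mul_assoc, hX]
    exact hS.symm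
  have hRX : Rᵀ * X = Pᵀ * X - S := by
    simp only [R, Matrix.transpose_sub, Matrix.sub_mul, Matrix.transpose_mul, hSsymm]
    rw [Matrix.mul_assoc, hX, Matrix.mul_one]
    rw [← hS, hSsymm]
  have h2S : Xᵀ * P + Pᵀ * X = S + S := by
    simp only [hS, msym, Matrix.transpose_mul, transpose_transpose]
    module
  have hvvT : (vecMulVec v v)ᵀ = vecMulVec v v := by
    ext i j
    simp [vecMulVec_apply, mul_comm]
  have hvvtv : (vecMulVec v v) *ᵥ v = (∑ i, (v i) ^ 2) • v := by
    funext i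
    simp only [mulVec, dotProduct, vecMulVec_apply, Pi.smul_apply, smul_eq_mul,
      sq]
    rw [Finset.sum_mul]
    exact Finset.sum_congr rfl fun k _ => by ring
  have hPv : Pᵀ *ᵥ v = 0 := by
    simp only [P, Matrix.transpose_sub, Matrix.sub_mulVec, Matrix.transpose_smul,
      Matrix.smul_mulVec, Matrix.transpose_mul, hvvT]
    rw [← Matrix.mulVec_mulVec, hvvtv, Matrix.mulVec_smul, smul_smul,
      inv_mul_cancel₀ hsum, one_smul, sub_self]
  refine ⟨?_, ?_, ?_⟩
  · rw [hXR, hRX, sub_add_sub_comm, h2S, sub_self]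
  · have : Rᵀ = Pᵀ - Sᵀ * Xᵀ := by
      simp [R, Matrix.transpose_sub, Matrix.transpose_mul]
      rw [← hS]
    rw [this, Matrix.sub_mulVec, hPv, ← Matrix.mulVec_mulVec, hXv]
    simp
  · intro H hH hHv
    have hZR : Z - R = (∑ i, (v i) ^ 2)⁻¹ • (vecMulVec v v * Z) + X * S := by
      simp only [R, P]
      abel
    have hvvH : vecMulVec v v * H = 0 := by
      ext i j
      simp only [mul_apply, vecMulVec_apply, Matrix.zero_apply]
      have e1 : ∑ k, v i * v k * H k j = v i * ∑ k, H k j * v k := by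
        rw [Finset.mul_sum]
        exact Finset.sum_congr rfl fun k _ => by ring
      have e2 : (∑ k, H k j * v k) = (Hᵀ *ᵥ v) j := by
        simp [mulVec, dotProduct, transpose_apply]
      rw [e1, e2, hHv]; simp
    have hM : (Xᵀ * H)ᵀ = -(Xᵀ * H) := by
      rw [Matrix.transpose_mul, transpose_transpose, eq_neg_iff_add_eq_zero, add_comm]
      exact hH
    have htr : Matrix.trace (S * (Xᵀ * H)) = 0 := by
      have e : Matrix.trace (S * (Xᵀ * H)) = -Matrix.trace (S * (Xᵀ * H)) := by
        conv_lhs => rw [← Matrix.trace_transpose, Matrix.transpose_mul, hM, hSsymm,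
          Matrix.neg_mul, Matrix.trace_neg, Matrix.trace_mul_comm]
      linarith
    rw [hZR]
    simp only [Matrix.transpose_add, Matrix.add_mul, Matrix.trace_add,
      Matrix.transpose_smul, Matrix.smul_mul, Matrix.trace_smul, Matrix.transpose_mul,
      hvvT]
    rw [Matrix.mul_assoc Zᵀ, hvvH, hSsymm, Matrix.mul_assoc, Matrix.trace_mul_comm, htr]
    simp
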